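/- Let n be a positive integer, θ ∈ (0,1), and let u be a classical solution of (CH_n) on [0,T); fix T₀ ∈ (0,T) and set M := sup over t ∈ [0,T₀] of (‖u(t,·)‖_∞ + ‖u_x(t,·)‖_∞). For each positive integer N let φ_N(x) = 1 for x ≤ 0, e^{θx} for 0 < x < N, and e^{θN} for x ≥ N. Then there exists a constant c > 0, depending only on n, θ and M, such that for every positive integer N and every t ∈ [0,T₀]: sup_x |φ_N(x) F_t(x)| ≤ c(sup_x |φ_N(x) u(t,x)| + sup_x |φ_N(x) u_x(t,x)|) and sup_x |φ_N(x) ∂_x F_t(x)| ≤ c(sup_x |φ_N(x) u(t,x)| + sup_x |φ_N(x) u_x(t,x)|). -/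

import Mathlib

open Real MeasureTheory Filter Topology
open scoped ENNReal
open Set intervalIntegral

/-- The Green function `g(x) = e^{-|x|}/2` of `1 - ∂ₓ²` on `ℝ`. -/
noncomputable def g (x : ℝ) : ℝ := Real.exp (-|x|) / 2

/-- `u_x`. -/
noncomputable def ux (u : ℝ → ℝ → ℝ) (t x : ℝ) : ℝ := deriv (u t) x
/-- `u_{xx}`. -/
noncomputable def uxx (u : ℝ → ℝ → ℝ) (t x : ℝ) : ℝ := deriv (deriv (u t)) x
/-- `u_{xxx}`. -/
noncomputable def uxxx (u : ℝ → ℝ → ℝ) (t x : ℝ) : ℝ := deriv (deriv (deriv (u t))) x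
/-- `u_t`. -/
noncomputable def ut (u : ℝ → ℝ → ℝ) (t x : ℝ) : ℝ := deriv (fun s => u s x) t
/-- `u_{tx}`. -/
noncomputable def utx (u : ℝ → ℝ → ℝ) (t x : ℝ) : ℝ := deriv (fun s => ux u s x) t
/-- `u_{txx}`. -/
noncomputable def utxx (u : ℝ → ℝ → ℝ) (t x : ℝ) : ℝ := deriv (fun s => uxx u s x) t

/-- `f_t(x) = (n/2) u^{n-1} u_x² + (n(n+3)/(2(n+1))) u^{n+1}`. -/
noncomputable def fLoc (n : ℕ) (u : ℝ → ℝ → ℝ) (t x : ℝ) : ℝ :=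
  ((n : ℝ) / 2) * u t x ^ (n - 1) * ux u t x ^ 2
    + ((n : ℝ) * ((n : ℝ) + 3) / (2 * ((n : ℝ) + 1))) * u t x ^ (n + 1)

/-- `F_t(x) = ∂ₓ (g ∗ f_t)(x)`. -/
noncomputable def FLoc (n : ℕ) (u : ℝ → ℝ → ℝ) (t x : ℝ) : ℝ :=
  deriv (fun z => ∫ y : ℝ, g (z - y) * fLoc n u t y) x

/-- The equation (CH_n) holds pointwise at `(t,x)`. -/
def CHn (n : ℕ) (u : ℝ → ℝ → ℝ) (t x : ℝ) : Prop :=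
  ut u t x - utxx u t x
      + (((n : ℝ) + 1) * ((n : ℝ) + 2) / 2) * u t x ^ n * ux u t x
    = ((n : ℝ) * ((n : ℝ) - 1) / 2) * u t x ^ (n - 2) * ux u t x ^ 3
      + 2 * (n : ℝ) * u t x ^ (n - 1) * ux u t x * uxx u t x
      + u t x ^ n * uxxx u t x

/-- The time interval `[0, T)`, where `T ∈ (0, ∞]`. -/
def timeDomain (T : ℝ≥0∞) : Set ℝ := {t : ℝ | 0 ≤ t ∧ ENNReal.ofReal t < T}

/-- A function which is bounded, integrable, square-integrable and tends to `0` at `±∞`. -/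
def Decays (w : ℝ → ℝ) : Prop :=
  (∃ C : ℝ, ∀ x : ℝ, |w x| ≤ C) ∧ Integrable w ∧
    Integrable (fun x => w x ^ 2) ∧ Tendsto w (cocompact ℝ) (𝓝 0)

/-- A classical solution of (CH_n) on `[0,T) × ℝ`. -/
structure IsClassicalSolution (n : ℕ) (T : ℝ≥0∞) (u : ℝ → ℝ → ℝ) : Prop where
  contDiff_x : ∀ t ∈ timeDomain T, ContDiff ℝ 3 (u t)
  diff_t : ∀ x : ℝ, ∀ t ∈ timeDomain T, DifferentiableAt ℝ (fun s => u s x) t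
  diff_tx : ∀ x : ℝ, ∀ t ∈ timeDomain T, DifferentiableAt ℝ (fun s => ux u s x) t
  diff_txx : ∀ x : ℝ, ∀ t ∈ timeDomain T, DifferentiableAt ℝ (fun s => uxx u s x) t
  cont_ut : ContinuousOn (fun p : ℝ × ℝ => ut u p.1 p.2) (timeDomain T ×ˢ Set.univ)
  cont_utx : ContinuousOn (fun p : ℝ × ℝ => utx u p.1 p.2) (timeDomain T ×ˢ Set.univ)
  cont_utxx : ContinuousOn (fun p : ℝ × ℝ => utxx u p.1 p.2) (timeDomain T ×ˢ Set.univ)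
  pde : ∀ t ∈ timeDomain T, ∀ x : ℝ, CHn n u t x
  nonlocal : ∀ t ∈ timeDomain T, ∀ x : ℝ,
    ut u t x + u t x ^ n * ux u t x + FLoc n u t x = 0
  decay_u : ∀ t ∈ timeDomain T, Decays (u t)
  decay_ux : ∀ t ∈ timeDomain T, Decays (ux u t)
  decay_uxx : ∀ t ∈ timeDomain T, Decays (uxx u t)
  decay_ut : ∀ t ∈ timeDomain T, Decays (ut u t)
  sup_bound : ∀ T₀ ∈ timeDomain T, ∃ M : ℝ, ∀ t ∈ Set.Icc (0 : ℝ) T₀, ∀ x : ℝ,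
    |u t x| + |ux u t x| ≤ M

/-- The cutoff weight `φ_N`. -/
noncomputable def phiN (θ : ℝ) (N : ℕ) (x : ℝ) : ℝ :=
  if x ≤ 0 then 1 else if x < N then Real.exp (θ * x) else Real.exp (θ * N)


lemma expIic_integrableOn {b : ℝ} (hb : 0 < b) (x : ℝ) :
    IntegrableOn (fun y => Real.exp (b * y)) (Iic x) := by
  refine integrableOn_Iic_of_intervalIntegral_norm_bounded (Real.exp (b * x) / b) x
    (fun i => (Real.continuous_exp.comp (continuous_const.mul continuous_id)).integrableOn_Ioc)
    (tendsto_id) ?_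
  filter_upwards with i
  simp only [id]
  have h0 : (∫ y in i..x, ‖Real.exp (b * y)‖) = ∫ y in i..x, Real.exp (b * y) := by
    congr 1; ext y; exact Real.norm_of_nonneg (Real.exp_pos _).le
  rw [h0, integral_comp_mul_left (fun y => Real.exp y) hb.ne', integral_exp, smul_eq_mul]
  have h2 : (0:ℝ) < b⁻¹ := inv_pos.mpr hb
  rw [div_eq_inv_mul]
  nlinarith [Real.exp_pos (b*i)]

lemma expIic_integral {b : ℝ} (hb : 0 < b) (x : ℝ) :
    (∫ y in Iic x, Real.exp (b * y)) = Real.exp (b * x) / b := by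
  refine tendsto_nhds_unique
    (intervalIntegral_tendsto_integral_Iic _ (expIic_integrableOn hb x) tendsto_id) ?_
  have h1 : ∀ i : ℝ, (∫ y in i..x, Real.exp (b * y)) = b⁻¹ * (Real.exp (b*x) - Real.exp (b*i)) := by
    intro i
    rw [integral_comp_mul_left (fun y => Real.exp y) hb.ne', integral_exp, smul_eq_mul]
  simp_rw [h1]
  have h2 : Tendsto (fun i : ℝ => Real.exp (b * i)) atBot (𝓝 0) := by
    apply Real.tendsto_exp_atBot.comp
    exact (tendsto_const_mul_atBot_of_pos hb).mpr tendsto_id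
  have := ((tendsto_const_nhds (x := Real.exp (b*x))).sub h2).const_mul b⁻¹
  simpa [div_eq_inv_mul] using this

lemma hasDerivAt_integral_Iic {w : ℝ → ℝ} (hw : Continuous w)
    (hwi : ∀ s : ℝ, IntegrableOn w (Iic s)) (x : ℝ) :
    HasDerivAt (fun s => ∫ y in Iic s, w y) (w x) x := by
  have key : ∀ s : ℝ, (∫ y in Iic s, w y) = (∫ y in Iic 0, w y) + ∫ y in (0:ℝ)..s, w y := by
    intro s
    rw [← integral_Iic_sub_Iic (hwi 0) (hwi s)]; ring
  have hd : HasDerivAt (fun s => (∫ y in Iic 0, w y) + ∫ y in (0:ℝ)..s, w y) (w x) x := by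
    refine HasDerivAt.const_add _ ?_
    exact integral_hasDerivAt_right (hw.intervalIntegrable 0 x)
      (hw.stronglyMeasurableAtFilter _ _) hw.continuousAt
  exact hd.congr_of_eventuallyEq (Eventually.of_forall key)

section Conv

variable {f : ℝ → ℝ}

noncomputable def Aint (f : ℝ → ℝ) (x : ℝ) : ℝ := ∫ y in Iic x, Real.exp y * f y
noncomputable def Bint (f : ℝ → ℝ) (x : ℝ) : ℝ := ∫ y in Ioi x, Real.exp (-y) * f y
noncomputable def convG (f : ℝ → ℝ) (x : ℝ) : ℝ := ∫ y, g (x - y) * f y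
noncomputable def FdG (f : ℝ → ℝ) (x : ℝ) : ℝ :=
  (Real.exp x * Bint f x - Real.exp (-x) * Aint f x) / 2

lemma Aint_integrableOn (hc : Continuous f) (hf : Integrable f) (x : ℝ) :
    IntegrableOn (fun y => Real.exp y * f y) (Iic x) := by
  refine Integrable.mono' ((hf.norm.const_mul (Real.exp x)).restrict (s := Iic x))
    ((Real.continuous_exp.mul hc).aestronglyMeasurable.restrict) ?_
  rw [ae_restrict_iff' measurableSet_Iic]
  filter_upwards with y hy
  have : |Real.exp y * f y| = Real.exp y * |f y| := by
    rw [abs_mul, abs_of_pos (Real.exp_pos y)]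
  rw [Real.norm_eq_abs, this]
  exact mul_le_mul_of_nonneg_right (Real.exp_le_exp.mpr hy) (abs_nonneg _)

lemma Bint_integrableOn (hc : Continuous f) (hf : Integrable f) (x : ℝ) :
    IntegrableOn (fun y => Real.exp (-y) * f y) (Ioi x) := by
  refine Integrable.mono' ((hf.norm.const_mul (Real.exp (-x))).restrict (s := Ioi x))
    (((Real.continuous_exp.comp continuous_neg).mul hc).aestronglyMeasurable.restrict) ?_
  rw [ae_restrict_iff' measurableSet_Ioi]
  filter_upwards with y hy
  have : |Real.exp (-y) * f y| = Real.exp (-y) * |f y| := by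
    rw [abs_mul, abs_of_pos (Real.exp_pos _)]
  rw [Real.norm_eq_abs, this]
  exact mul_le_mul_of_nonneg_right (Real.exp_le_exp.mpr (by linarith [(le_of_lt hy : x ≤ y)])) (abs_nonneg _)

lemma hasDerivAt_Aint (hc : Continuous f) (hf : Integrable f) (x : ℝ) :
    HasDerivAt (Aint f) (Real.exp x * f x) x :=
  hasDerivAt_integral_Iic (Real.continuous_exp.mul hc) (Aint_integrableOn hc hf) x

lemma hasDerivAt_Bint (hc : Continuous f) (hf : Integrable f) (x : ℝ) :
    HasDerivAt (Bint f) (-(Real.exp (-x) * f x)) x := by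
  have hcn : Continuous (fun z => f (-z)) := hc.comp continuous_neg
  have hin : Integrable (fun z => f (-z)) := hf.comp_neg
  have hkey : ∀ s : ℝ, Bint f s = Aint (fun z => f (-z)) (-s) := by
    intro s
    rw [Aint, ← integral_comp_neg_Ioi]
    simp [Bint]
  have hd : HasDerivAt (fun s => Aint (fun z => f (-z)) (-s))
      (-(Real.exp (-x) * f x)) x := by
    have h1 := (hasDerivAt_Aint hcn hin (-x)).comp x (hasDerivAt_neg x)
    simpa [Function.comp_def] using h1
  exact hd.congr_of_eventuallyEq (Eventually.of_forall hkey) |>.congr_deriv rfl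

lemma convG_eq (hc : Continuous f) (hf : Integrable f) (x : ℝ) :
    convG f x = (Real.exp (-x) * Aint f x + Real.exp x * Bint f x) / 2 := by
  have hmeas : AEStronglyMeasurable (fun y => g (x - y) * f y) volume :=
    (((Real.continuous_exp.comp (continuous_abs.comp
      (continuous_const.sub continuous_id)).neg).div_const 2).mul hc).aestronglyMeasurable
  have hL : IntegrableOn (fun y => g (x - y) * f y) (Iic x) := by
    refine Integrable.mono' (((Aint_integrableOn hc.abs hf.abs x).const_mul (Real.exp (-x) / 2)))
      hmeas.restrict ?_
    rw [ae_restrict_iff' measurableSet_Iic]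
    filter_upwards with y hy
    have hy' : y ≤ x := hy
    have h1 : g (x - y) = Real.exp (-x) / 2 * Real.exp y := by
      rw [g, abs_of_nonneg (by linarith : (0:ℝ) ≤ x - y),
        show -(x-y) = -x + y by ring, Real.exp_add]; ring
    rw [Real.norm_eq_abs, h1, abs_mul, abs_mul, abs_of_pos (by positivity : (0:ℝ) < Real.exp (-x) / 2),
      abs_of_pos (Real.exp_pos y)]
    exact le_of_eq (by ring)
  have hR : IntegrableOn (fun y => g (x - y) * f y) (Ioi x) := by
    refine Integrable.mono' (((Bint_integrableOn hc.abs hf.abs x).const_mul (Real.exp x / 2)))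
      hmeas.restrict ?_
    rw [ae_restrict_iff' measurableSet_Ioi]
    filter_upwards with y hy
    have hy' : x ≤ y := le_of_lt hy
    have h1 : g (x - y) = Real.exp x / 2 * Real.exp (-y) := by
      rw [g, abs_of_nonpos (by linarith : x - y ≤ (0:ℝ)),
        show -(-(x-y)) = x + -y by ring, Real.exp_add]; ring
    rw [Real.norm_eq_abs, h1, abs_mul, abs_mul, abs_of_pos (by positivity : (0:ℝ) < Real.exp x / 2),
      abs_of_pos (Real.exp_pos (-y))]
    exact le_of_eq (by ring)
  have hsplit := integral_Iic_add_Ioi hL hR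
  have hLval : (∫ y in Iic x, g (x - y) * f y) = Real.exp (-x) / 2 * Aint f x := by
    rw [Aint, ← MeasureTheory.integral_const_mul]
    refine setIntegral_congr_fun measurableSet_Iic (fun y hy => ?_)
    have hy' : y ≤ x := hy
    rw [g, abs_of_nonneg (by linarith : (0:ℝ) ≤ x - y),
      show -(x-y) = -x + y by ring, Real.exp_add]; ring
  have hRval : (∫ y in Ioi x, g (x - y) * f y) = Real.exp x / 2 * Bint f x := by
    rw [Bint, ← MeasureTheory.integral_const_mul]
    refine setIntegral_congr_fun measurableSet_Ioi (fun y hy => ?_)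
    have hy' : x ≤ y := le_of_lt hy
    rw [g, abs_of_nonpos (by linarith : x - y ≤ (0:ℝ)),
      show -(-(x-y)) = x + -y by ring, Real.exp_add]; ring
  rw [convG, ← hsplit, hLval, hRval]; ring


lemma expnegexp (x : ℝ) : Real.exp (-x) * Real.exp x = 1 := by
  rw [← Real.exp_add]; simp

lemma hasDerivAt_expneg (x : ℝ) : HasDerivAt (fun s => Real.exp (-s)) (-Real.exp (-x)) x := by
  simpa [Function.comp_def] using (Real.hasDerivAt_exp (-x)).comp x (hasDerivAt_neg x)

lemma hasDerivAt_convG (hc : Continuous f) (hf : Integrable f) (x : ℝ) :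
    HasDerivAt (convG f) (FdG f x) x := by
  have hA := hasDerivAt_Aint hc hf x
  have hB := hasDerivAt_Bint hc hf x
  have hd := (((hasDerivAt_expneg x).mul hA).add ((Real.hasDerivAt_exp x).mul hB)).div_const 2
  have h1 : HasDerivAt (fun s => (Real.exp (-s) * Aint f s + Real.exp s * Bint f s) / 2)
      (FdG f x) x := by
    refine hd.congr_deriv (Eq.symm ?_)
    rw [FdG]; ring
  exact h1.congr_of_eventuallyEq (Eventually.of_forall (fun s => convG_eq hc hf s))

lemma hasDerivAt_FdG (hc : Continuous f) (hf : Integrable f) (x : ℝ) :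
    HasDerivAt (FdG f) (convG f x - f x) x := by
  have hA := hasDerivAt_Aint hc hf x
  have hB := hasDerivAt_Bint hc hf x
  have hd := (((Real.hasDerivAt_exp x).mul hB).sub ((hasDerivAt_expneg x).mul hA)).div_const 2
  have h1 : HasDerivAt (fun s => (Real.exp s * Bint f s - Real.exp (-s) * Aint f s) / 2)
      (convG f x - f x) x := by
    refine hd.congr_deriv (Eq.symm ?_)
    rw [convG_eq hc hf x]
    linear_combination (f x) * expnegexp x
  exact h1.congr_of_eventuallyEq (Eventually.of_forall (fun s => by rw [FdG]))

end Conv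

lemma phiN_eq (θ : ℝ) (N : ℕ) (x : ℝ) :
    phiN θ N x = Real.exp (θ * min (max x 0) N) := by
  rw [phiN]
  rcases le_or_gt x 0 with h | h
  · rw [if_pos h, max_eq_right h, min_eq_left (by exact_mod_cast Nat.cast_nonneg N), mul_zero,
      Real.exp_zero]
  · rw [if_neg (not_le.mpr h), max_eq_left h.le]
    rcases lt_or_ge x N with h2 | h2
    · rw [if_pos h2, min_eq_left h2.le]
    · rw [if_neg (not_lt.mpr h2), min_eq_right h2]

lemma phiN_pos (θ : ℝ) (N : ℕ) (x : ℝ) : 0 < phiN θ N x := by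
  rw [phiN_eq]; exact Real.exp_pos _

lemma phiN_le_exp (θ : ℝ) (hθ : 0 ≤ θ) (N : ℕ) (x : ℝ) :
    phiN θ N x ≤ Real.exp (θ * N) := by
  rw [phiN_eq]
  exact Real.exp_le_exp.mpr (mul_le_mul_of_nonneg_left (min_le_right _ _) hθ)

lemma phiN_mono (θ : ℝ) (hθ : 0 ≤ θ) (N : ℕ) {x y : ℝ} (h : x ≤ y) :
    phiN θ N x ≤ phiN θ N y := by
  rw [phiN_eq, phiN_eq]
  refine Real.exp_le_exp.mpr (mul_le_mul_of_nonneg_left ?_ hθ)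
  exact min_le_min (max_le_max h le_rfl) le_rfl

lemma phiN_key (θ : ℝ) (hθ : 0 ≤ θ) (N : ℕ) {x y : ℝ} (h : y ≤ x) :
    phiN θ N x ≤ Real.exp (θ * (x - y)) * phiN θ N y := by
  rw [phiN_eq, phiN_eq, ← Real.exp_add]
  refine Real.exp_le_exp.mpr ?_
  rw [← mul_add]
  refine mul_le_mul_of_nonneg_left ?_ hθ
  have : min (max x 0) (N:ℝ) - min (max y 0) (N:ℝ) ≤ x - y := by
    simp only [min_def, max_def]
    split_ifs <;> linarith
  linarith

section Est

variable {f : ℝ → ℝ} {θ : ℝ} {N : ℕ} {D : ℝ}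

lemma estA (hc : Continuous f) (hf : Integrable f) (hθ : θ ∈ Set.Ioo (0:ℝ) 1)
    (hD : 0 ≤ D) (hfb : ∀ y, phiN θ N y * |f y| ≤ D) (x : ℝ) :
    phiN θ N x * (Real.exp (-x) * |Aint f x|) ≤ D / (1 - θ) := by
  obtain ⟨hθ0, hθ1⟩ := hθ
  set b := 1 - θ with hbdef
  have hb : 0 < b := by rw [hbdef]; linarith
  have h1 : |Aint f x| ≤ ∫ y in Iic x, Real.exp y * |f y| := by
    have h0 : (∫ y in Iic x, ‖Real.exp y * f y‖) = ∫ y in Iic x, Real.exp y * |f y| := by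
      refine setIntegral_congr_fun measurableSet_Iic (fun y _ => ?_)
      rw [Real.norm_eq_abs, abs_mul, abs_of_pos (Real.exp_pos y)]
    rw [Aint, ← Real.norm_eq_abs, ← h0]
    exact MeasureTheory.norm_integral_le_integral_norm _
  have hphi := phiN_pos θ N x
  have h2 : phiN θ N x * (Real.exp (-x) * |Aint f x|)
      ≤ ∫ y in Iic x, (phiN θ N x * Real.exp (-x)) * (Real.exp y * |f y|) := by
    rw [MeasureTheory.integral_const_mul]
    have hpos : (0:ℝ) < phiN θ N x * Real.exp (-x) := by positivity
    calc phiN θ N x * (Real.exp (-x) * |Aint f x|)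
        = (phiN θ N x * Real.exp (-x)) * |Aint f x| := by ring
      _ ≤ _ := mul_le_mul_of_nonneg_left h1 hpos.le
  have h3 : (∫ y in Iic x, (phiN θ N x * Real.exp (-x)) * (Real.exp y * |f y|))
      ≤ ∫ y in Iic x, (D * Real.exp (-(b*x))) * Real.exp (b*y) := by
    refine setIntegral_mono_on
      ((Aint_integrableOn hc.abs hf.abs x).const_mul _)
      ((expIic_integrableOn hb x).const_mul _) measurableSet_Iic (fun y hy => ?_)
    have hy' : y ≤ x := hy
    have hkey := phiN_key θ hθ0.le N hy'
    calc (phiN θ N x * Real.exp (-x)) * (Real.exp y * |f y|)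
        ≤ ((Real.exp (θ*(x-y)) * phiN θ N y) * Real.exp (-x)) * (Real.exp y * |f y|) := by
          refine mul_le_mul_of_nonneg_right
            (mul_le_mul_of_nonneg_right hkey (Real.exp_pos _).le) (by positivity)
      _ = Real.exp (θ*(x-y) + -x + y) * (phiN θ N y * |f y|) := by
          rw [Real.exp_add, Real.exp_add]; ring
      _ ≤ Real.exp (θ*(x-y) + -x + y) * D :=
          mul_le_mul_of_nonneg_left (hfb y) (Real.exp_pos _).le
      _ = (D * Real.exp (-(b*x))) * Real.exp (b*y) := by
          have he : θ*(x-y) + -x + y = -(b*x) + b*y := by rw [hbdef]; ring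
          rw [he, Real.exp_add]; ring
  have h4 : (∫ y in Iic x, (D * Real.exp (-(b*x))) * Real.exp (b*y)) = D / b := by
    rw [MeasureTheory.integral_const_mul, expIic_integral hb]
    have he : Real.exp (-(b*x)) * Real.exp (b*x) = 1 := by rw [← Real.exp_add]; simp
    field_simp
    linear_combination D * he
  calc phiN θ N x * (Real.exp (-x) * |Aint f x|) ≤ _ := h2
    _ ≤ _ := h3
    _ = D / b := h4

lemma estB (hc : Continuous f) (hf : Integrable f) (hθ : θ ∈ Set.Ioo (0:ℝ) 1)
    (hD : 0 ≤ D) (hfb : ∀ y, phiN θ N y * |f y| ≤ D) (x : ℝ) :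
    phiN θ N x * (Real.exp x * |Bint f x|) ≤ D := by
  obtain ⟨hθ0, hθ1⟩ := hθ
  have hphi := phiN_pos θ N x
  have h1 : |Bint f x| ≤ ∫ y in Ioi x, Real.exp (-y) * |f y| := by
    have h0 : (∫ y in Ioi x, ‖Real.exp (-y) * f y‖) = ∫ y in Ioi x, Real.exp (-y) * |f y| := by
      refine setIntegral_congr_fun measurableSet_Ioi (fun y _ => ?_)
      rw [Real.norm_eq_abs, abs_mul, abs_of_pos (Real.exp_pos _)]
    rw [Bint, ← Real.norm_eq_abs, ← h0]
    exact MeasureTheory.norm_integral_le_integral_norm _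
  have hexpI : IntegrableOn (fun y => Real.exp (-y)) (Ioi x) := by
    have := exp_neg_integrableOn_Ioi x (one_pos)
    simpa using this
  have h2 : phiN θ N x * (Real.exp x * |Bint f x|)
      ≤ ∫ y in Ioi x, (phiN θ N x * Real.exp x) * (Real.exp (-y) * |f y|) := by
    rw [MeasureTheory.integral_const_mul]
    have hpos : (0:ℝ) < phiN θ N x * Real.exp x := by positivity
    calc phiN θ N x * (Real.exp x * |Bint f x|)
        = (phiN θ N x * Real.exp x) * |Bint f x| := by ring
      _ ≤ _ := mul_le_mul_of_nonneg_left h1 hpos.le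
  have h3 : (∫ y in Ioi x, (phiN θ N x * Real.exp x) * (Real.exp (-y) * |f y|))
      ≤ ∫ y in Ioi x, (D * Real.exp x) * Real.exp (-y) := by
    refine setIntegral_mono_on
      ((Bint_integrableOn hc.abs hf.abs x).const_mul _)
      (hexpI.const_mul _) measurableSet_Ioi (fun y hy => ?_)
    have hy' : x ≤ y := le_of_lt hy
    have hkey := phiN_mono θ hθ0.le N hy'
    calc (phiN θ N x * Real.exp x) * (Real.exp (-y) * |f y|)
        = (Real.exp x * Real.exp (-y)) * (phiN θ N x * |f y|) := by ring
      _ ≤ (Real.exp x * Real.exp (-y)) * (phiN θ N y * |f y|) := by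
          refine mul_le_mul_of_nonneg_left
            (mul_le_mul_of_nonneg_right hkey (abs_nonneg _)) (by positivity)
      _ ≤ (Real.exp x * Real.exp (-y)) * D :=
          mul_le_mul_of_nonneg_left (hfb y) (by positivity)
      _ = (D * Real.exp x) * Real.exp (-y) := by ring
  have h4 : (∫ y in Ioi x, (D * Real.exp x) * Real.exp (-y)) = D := by
    rw [MeasureTheory.integral_const_mul, integral_exp_neg_Ioi]
    have he : Real.exp x * Real.exp (-x) = 1 := by rw [← Real.exp_add]; simp
    linear_combination D * he
  calc phiN θ N x * (Real.exp x * |Bint f x|) ≤ _ := h2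
    _ ≤ _ := h3
    _ = D := h4

lemma estFd (hc : Continuous f) (hf : Integrable f) (hθ : θ ∈ Set.Ioo (0:ℝ) 1)
    (hD : 0 ≤ D) (hfb : ∀ y, phiN θ N y * |f y| ≤ D) (x : ℝ) :
    phiN θ N x * |FdG f x| ≤ D / (1 - θ) := by
  have hb : 0 < 1 - θ := by linarith [hθ.2]
  have hphi := phiN_pos θ N x
  have hDb : D ≤ D / (1 - θ) := by
    rw [le_div_iff₀ hb]; nlinarith [mul_nonneg hD hθ.1.le]
  have h1 : |FdG f x| ≤ (Real.exp x * |Bint f x| + Real.exp (-x) * |Aint f x|) / 2 := by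
    rw [FdG, abs_div, abs_of_pos (by norm_num : (0:ℝ) < 2)]
    apply div_le_div_of_nonneg_right ?_ (by norm_num)
    calc |Real.exp x * Bint f x - Real.exp (-x) * Aint f x|
        ≤ |Real.exp x * Bint f x| + |Real.exp (-x) * Aint f x| := abs_sub _ _
      _ = Real.exp x * |Bint f x| + Real.exp (-x) * |Aint f x| := by
          rw [abs_mul, abs_mul, abs_of_pos (Real.exp_pos _), abs_of_pos (Real.exp_pos _)]
  have hA := estA hc hf hθ hD hfb x
  have hB := estB hc hf hθ hD hfb x
  calc phiN θ N x * |FdG f x|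
      ≤ phiN θ N x * ((Real.exp x * |Bint f x| + Real.exp (-x) * |Aint f x|) / 2) :=
        mul_le_mul_of_nonneg_left h1 hphi.le
    _ = (phiN θ N x * (Real.exp x * |Bint f x|) + phiN θ N x * (Real.exp (-x) * |Aint f x|)) / 2 := by
        ring
    _ ≤ (D + D / (1-θ)) / 2 := by
        apply div_le_div_of_nonneg_right (add_le_add hB hA) (by norm_num)
    _ ≤ D / (1 - θ) := by linarith

lemma estConv (hc : Continuous f) (hf : Integrable f) (hθ : θ ∈ Set.Ioo (0:ℝ) 1)
    (hD : 0 ≤ D) (hfb : ∀ y, phiN θ N y * |f y| ≤ D) (x : ℝ) :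
    phiN θ N x * |convG f x| ≤ D / (1 - θ) := by
  have hb : 0 < 1 - θ := by linarith [hθ.2]
  have hphi := phiN_pos θ N x
  have hDb : D ≤ D / (1 - θ) := by
    rw [le_div_iff₀ hb]; nlinarith [mul_nonneg hD hθ.1.le]
  have h1 : |convG f x| ≤ (Real.exp x * |Bint f x| + Real.exp (-x) * |Aint f x|) / 2 := by
    rw [convG_eq hc hf x, abs_div, abs_of_pos (by norm_num : (0:ℝ) < 2)]
    apply div_le_div_of_nonneg_right ?_ (by norm_num)
    calc |Real.exp (-x) * Aint f x + Real.exp x * Bint f x|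
        ≤ |Real.exp (-x) * Aint f x| + |Real.exp x * Bint f x| := abs_add_le _ _
      _ = Real.exp x * |Bint f x| + Real.exp (-x) * |Aint f x| := by
          rw [abs_mul, abs_mul, abs_of_pos (Real.exp_pos _), abs_of_pos (Real.exp_pos _)]; ring
  have hA := estA hc hf hθ hD hfb x
  have hB := estB hc hf hθ hD hfb x
  calc phiN θ N x * |convG f x|
      ≤ phiN θ N x * ((Real.exp x * |Bint f x| + Real.exp (-x) * |Aint f x|) / 2) :=
        mul_le_mul_of_nonneg_left h1 hphi.le
    _ = (phiN θ N x * (Real.exp x * |Bint f x|) + phiN θ N x * (Real.exp (-x) * |Aint f x|)) / 2 := by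
        ring
    _ ≤ (D + D / (1-θ)) / 2 := by
        apply div_le_div_of_nonneg_right (add_le_add hB hA) (by norm_num)
    _ ≤ D / (1 - θ) := by linarith

end Est

lemma le_div_one_sub {D θ : ℝ} (hD : 0 ≤ D) (h0 : 0 ≤ θ) (h1 : θ < 1) : D ≤ D / (1 - θ) := by
  rw [le_div_iff₀ (by linarith)]; nlinarith

/-- The weighted estimates `‖φ_N F_t‖_∞, ‖φ_N ∂ₓF_t‖_∞ ≤
c(‖φ_N u(t)‖_∞ + ‖φ_N u_x(t)‖_∞)`, with `c` depending only on `n`, `θ` and `M`. -/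
theorem weighted_estimates_for_nonlocal_term
    (n : ℕ) (hn : 0 < n) (θ : ℝ) (hθ : θ ∈ Set.Ioo (0 : ℝ) 1)
    (T : ℝ≥0∞) (hT : 0 < T) (u : ℝ → ℝ → ℝ) (hu : IsClassicalSolution n T u)
    (T₀ : ℝ) (hT₀ : 0 < T₀) (hT₀T : ENNReal.ofReal T₀ < T)
    (M : ℝ) (hM : ∀ t ∈ Set.Icc (0 : ℝ) T₀, ∀ x : ℝ, |u t x| + |ux u t x| ≤ M) :
    ∃ c : ℝ, 0 < c ∧ ∀ N : ℕ, 0 < N → ∀ t ∈ Set.Icc (0 : ℝ) T₀,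
      (⨆ x : ℝ, |phiN θ N x * FLoc n u t x|)
          ≤ c * ((⨆ x : ℝ, |phiN θ N x * u t x|) + (⨆ x : ℝ, |phiN θ N x * ux u t x|)) ∧
      (⨆ x : ℝ, |phiN θ N x * deriv (FLoc n u t) x|)
          ≤ c * ((⨆ x : ℝ, |phiN θ N x * u t x|) + (⨆ x : ℝ, |phiN θ N x * ux u t x|)) := by
  obtain ⟨hθ0, hθ1⟩ := hθ
  set Mb : ℝ := |M| + 1 with hMbdef
  have hMb : 0 < Mb := by positivity
  set cn : ℝ := (n : ℝ) * ((n : ℝ) + 3) / (2 * ((n : ℝ) + 1)) with hcndef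
  have hcn : 0 ≤ cn := by positivity
  set K : ℝ := ((n : ℝ) / 2 + cn) * Mb ^ n with hKdef
  have hK : 0 ≤ K := by positivity
  have hb : 0 < 1 - θ := by linarith
  set c : ℝ := K / (1 - θ) + K + 1 with hcdef
  have hc : 0 < c := by positivity
  refine ⟨c, hc, fun N hN t ht => ?_⟩
  have ht' : t ∈ timeDomain T :=
    ⟨ht.1, lt_of_le_of_lt (ENNReal.ofReal_le_ofReal ht.2) hT₀T⟩
  -- bounds on u and ux
  have hub : ∀ x, |u t x| ≤ Mb := fun x => by
    have := hM t ht x; have := abs_nonneg (ux u t x); rw [hMbdef]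
    have := le_abs_self M; linarith
  have huxb : ∀ x, |ux u t x| ≤ Mb := fun x => by
    have := hM t ht x; have := abs_nonneg (u t x); rw [hMbdef]
    have := le_abs_self M; linarith
  -- continuity
  have hcu : Continuous (u t) := (hu.contDiff_x t ht').continuous
  have hcux : Continuous (ux u t) := by
    have := (hu.contDiff_x t ht').continuous_deriv (by norm_num)
    exact this
  have hcf : Continuous (fLoc n u t) := by
    unfold fLoc
    exact ((continuous_const.mul (hcu.pow _)).mul (hcux.pow 2)).add
      (continuous_const.mul (hcu.pow _))
  -- pointwise bound |fLoc| ≤ C1 ux² + C2 u²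
  have hMbpow : Mb ^ (n-1) * Mb = Mb ^ n := by
    rw [← pow_succ, Nat.sub_add_cancel hn]
  have hfb0 : ∀ y, |fLoc n u t y| ≤
      ((n:ℝ)/2 * Mb^(n-1)) * (ux u t y)^2 + (cn * Mb^(n-1)) * (u t y)^2 := by
    intro y
    have h1 : |u t y| ^ (n-1) ≤ Mb^(n-1) := pow_le_pow_left₀ (abs_nonneg _) (hub y) _
    have h2 : |u t y| ^ (n+1) ≤ Mb^(n-1) * (u t y)^2 := by
      have he : |u t y| ^ (n+1) = |u t y|^(n-1) * |u t y|^2 := by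
        rw [← pow_add]; congr 1; omega
      rw [he, sq_abs]
      exact mul_le_mul_of_nonneg_right
        (pow_le_pow_left₀ (abs_nonneg _) (hub y) _) (sq_nonneg _)
    rw [fLoc]
    calc |(n:ℝ)/2 * u t y ^ (n-1) * ux u t y ^ 2 + cn * u t y ^ (n+1)|
        ≤ |(n:ℝ)/2 * u t y ^ (n-1) * ux u t y ^ 2| + |cn * u t y ^ (n+1)| := abs_add_le _ _
      _ ≤ ((n:ℝ)/2 * Mb^(n-1)) * (ux u t y)^2 + (cn * Mb^(n-1)) * (u t y)^2 := by
          simp only [abs_mul, abs_pow, sq_abs, abs_of_nonneg (by positivity : (0:ℝ) ≤ (n:ℝ)/2),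
            abs_of_nonneg hcn]
          have t1 : (n:ℝ)/2 * |u t y| ^ (n-1) * ux u t y ^ 2
              ≤ (n:ℝ)/2 * Mb^(n-1) * ux u t y ^ 2 := by
            exact mul_le_mul_of_nonneg_right
              (mul_le_mul_of_nonneg_left h1 (by positivity)) (sq_nonneg _)
          have t2 : cn * |u t y| ^ (n+1) ≤ cn * Mb^(n-1) * u t y ^ 2 := by
            rw [mul_assoc]
            exact mul_le_mul_of_nonneg_left h2 hcn
          linarith
  -- integrability of fLoc
  have hif : Integrable (fLoc n u t) := by
    have hi2 : Integrable (fun x => ux u t x ^ 2) := (hu.decay_ux t ht').2.2.1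
    have hi1 : Integrable (fun x => u t x ^ 2) := (hu.decay_u t ht').2.2.1
    refine Integrable.mono' ((hi2.const_mul ((n:ℝ)/2 * Mb^(n-1))).add
      (hi1.const_mul (cn * Mb^(n-1)))) hcf.aestronglyMeasurable ?_
    filter_upwards with y
    rw [Real.norm_eq_abs]
    exact hfb0 y
  -- the sups
  set S1 : ℝ := ⨆ x : ℝ, |phiN θ N x * u t x| with hS1def
  set S2 : ℝ := ⨆ x : ℝ, |phiN θ N x * ux u t x| with hS2def
  have hphiE : ∀ x, phiN θ N x ≤ Real.exp (θ * N) := phiN_le_exp θ hθ0.le N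
  have hbdd1 : BddAbove (Set.range fun x => |phiN θ N x * u t x|) := by
    refine ⟨Real.exp (θ*N) * Mb, fun z hz => ?_⟩
    obtain ⟨x, rfl⟩ := hz
    show |phiN θ N x * u t x| ≤ _
    rw [abs_mul, abs_of_pos (phiN_pos θ N x)]
    exact mul_le_mul (hphiE x) (hub x) (abs_nonneg _) (Real.exp_pos _).le
  have hbdd2 : BddAbove (Set.range fun x => |phiN θ N x * ux u t x|) := by
    refine ⟨Real.exp (θ*N) * Mb, fun z hz => ?_⟩
    obtain ⟨x, rfl⟩ := hz
    show |phiN θ N x * ux u t x| ≤ _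
    rw [abs_mul, abs_of_pos (phiN_pos θ N x)]
    exact mul_le_mul (hphiE x) (huxb x) (abs_nonneg _) (Real.exp_pos _).le
  have hS1nn : 0 ≤ S1 := le_trans (abs_nonneg _) (le_ciSup hbdd1 0)
  have hS2nn : 0 ≤ S2 := le_trans (abs_nonneg _) (le_ciSup hbdd2 0)
  have hle1 : ∀ y, phiN θ N y * |u t y| ≤ S1 := fun y => by
    have he : phiN θ N y * |u t y| = |phiN θ N y * u t y| := by
      rw [abs_mul, abs_of_pos (phiN_pos θ N y)]
    rw [he]; exact le_ciSup hbdd1 y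
  have hle2 : ∀ y, phiN θ N y * |ux u t y| ≤ S2 := fun y => by
    have he : phiN θ N y * |ux u t y| = |phiN θ N y * ux u t y| := by
      rw [abs_mul, abs_of_pos (phiN_pos θ N y)]
    rw [he]; exact le_ciSup hbdd2 y
  -- key pointwise weighted bound on fLoc
  set D : ℝ := K * (S1 + S2) with hDdef
  have hD : 0 ≤ D := by positivity
  have hfb : ∀ y, phiN θ N y * |fLoc n u t y| ≤ D := by
    intro y
    have hphi := phiN_pos θ N y
    calc phiN θ N y * |fLoc n u t y|
        ≤ phiN θ N y * (((n:ℝ)/2 * Mb^(n-1)) * (ux u t y)^2 + (cn * Mb^(n-1)) * (u t y)^2) :=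
          mul_le_mul_of_nonneg_left (hfb0 y) hphi.le
      _ = ((n:ℝ)/2 * Mb^(n-1)) * (|ux u t y| * (phiN θ N y * |ux u t y|))
          + (cn * Mb^(n-1)) * (|u t y| * (phiN θ N y * |u t y|)) := by
          rw [← sq_abs (ux u t y), ← sq_abs (u t y)]; ring
      _ ≤ ((n:ℝ)/2 * Mb^(n-1)) * (Mb * S2) + (cn * Mb^(n-1)) * (Mb * S1) := by
          gcongr ?_ + ?_
          · refine mul_le_mul_of_nonneg_left ?_ (by positivity)
            exact mul_le_mul (huxb y) (hle2 y) (by positivity) hMb.le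
          · refine mul_le_mul_of_nonneg_left ?_ (by positivity)
            exact mul_le_mul (hub y) (hle1 y) (by positivity) hMb.le
      _ ≤ D := by
          rw [hDdef, hKdef]
          have e1 : (n:ℝ)/2 * Mb^(n-1) * (Mb * S2) = ((n:ℝ)/2 * (Mb^(n-1)*Mb)) * S2 := by ring
          have e2 : cn * Mb^(n-1) * (Mb * S1) = (cn * (Mb^(n-1)*Mb)) * S1 := by ring
          rw [e1, e2, hMbpow]
          nlinarith [mul_nonneg (mul_nonneg (le_of_lt (by positivity : (0:ℝ) < (n:ℝ)/2 + 1)) hS1nn) hS2nn, pow_pos hMb n, mul_nonneg hS1nn hS2nn,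
            mul_nonneg (mul_nonneg hcn (le_of_lt (pow_pos hMb n))) hS2nn,
            mul_nonneg (mul_nonneg (by positivity : (0:ℝ) ≤ (n:ℝ)/2) (le_of_lt (pow_pos hMb n))) hS1nn]
  -- identify FLoc with FdG
  have hFeq : FLoc n u t = FdG (fLoc n u t) := by
    funext x
    rw [FLoc]
    exact (hasDerivAt_convG hcf hif x).deriv
  have hFd : ∀ x, deriv (FLoc n u t) x = convG (fLoc n u t) x - fLoc n u t x := by
    intro x
    rw [hFeq]
    exact (hasDerivAt_FdG hcf hif x).deriv
  have hcRHS : D / (1-θ) ≤ c * (S1 + S2) := by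
    have h1 : 0 ≤ S1 + S2 := by linarith
    have e : D/(1-θ) = (K/(1-θ))*(S1+S2) := by rw [hDdef]; ring
    rw [e, hcdef]
    nlinarith [mul_nonneg (by linarith : (0:ℝ) ≤ K+1) h1]
  constructor
  · refine Real.iSup_le (fun x => ?_) (le_trans (by positivity) hcRHS)
    rw [abs_mul, abs_of_pos (phiN_pos θ N x), hFeq]
    exact le_trans (estFd hcf hif ⟨hθ0, hθ1⟩ hD hfb x) hcRHS
  · refine Real.iSup_le (fun x => ?_) (le_trans (by positivity) hcRHS)
    rw [abs_mul, abs_of_pos (phiN_pos θ N x), hFd x]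
    have h1 : |convG (fLoc n u t) x - fLoc n u t x|
        ≤ |convG (fLoc n u t) x| + |fLoc n u t x| := abs_sub _ _
    have h2 := estConv hcf hif ⟨hθ0, hθ1⟩ hD hfb x
    have h3 := hfb x
    have hphi := (phiN_pos θ N x).le
    have hDb : D ≤ D / (1 - θ) := le_div_one_sub hD hθ0.le hθ1
    calc phiN θ N x * |convG (fLoc n u t) x - fLoc n u t x|
        ≤ phiN θ N x * (|convG (fLoc n u t) x| + |fLoc n u t x|) :=
          mul_le_mul_of_nonneg_left h1 hphi
      _ = phiN θ N x * |convG (fLoc n u t) x| + phiN θ N x * |fLoc n u t x| := by ring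
      _ ≤ D / (1-θ) + D := add_le_add h2 h3
      _ = (K / (1-θ) + K) * (S1 + S2) := by rw [hDdef]; ring
      _ ≤ c * (S1 + S2) := by
          refine mul_le_mul_of_nonneg_right ?_ (by linarith)
          rw [hcdef]; linarith
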